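/- Let d ≥ 2 be a natural number, c > 0, c' > 0, σ > 0 reals, and define f, g ∈ EuclideanSpace ℝ (Fin d) by f 0 = c'·(d−1)·Real.sqrt (1/(d·(d−1))), f j = −c'·Real.sqrt (1/(d·(d−1))) for j ≠ 0, and g 0 = c·(d−1)·Real.sqrt (1/(d·(d−1))), g j = −c·Real.sqrt (1/(d·(d−1))) for j ≠ 0. With π j = Equiv.swap 0 j for j : Fin d, set x j = Real.exp (⟪f, g ∘ π j⟫ / σ²) and x' j = Real.exp (⟪f + g, g ∘ π j⟫ / σ²). Then σ_{Z1}² := Real.log ((∑ j, (x j)²)/(∑ j, x j)² · (Real.exp (c²/σ²) − 1) + 1) equals Real.log ((1 + (d−1)·Real.exp (−2·d·c·c'/((d−1)·σ²))) / (1 + (d−1)·Real.exp (−d·c·c'/((d−1)·σ²)))² · (Real.exp (c²/σ²) − 1) + 1), and σ_{Z2}² := Real.log ((∑ j, (x' j)²)/(∑ j, x' j)² · (Real.exp (c²/σ²) − 1) + 1) equals Real.log ((1 + (d−1)·Real.exp (−2·d·c·(c+c')/((d−1)·σ²))) / (1 + (d−1)·Real.exp (−d·c·(c+c')/((d−1)·σ²)))²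 · (Real.exp (c²/σ²) − 1) + 1). -/

import Mathlib

open RealInnerProductSpace

/-- The coordinate-permuted copy of a vector: `(permVec π w) j = w (π j)`. -/
def permVec {d : ℕ} (π : Equiv.Perm (Fin d)) (w : EuclideanSpace ℝ (Fin d)) :
    EuclideanSpace ℝ (Fin d) :=
  WithLp.toLp 2 (fun j => w (π j))

lemma sum_if_fin {d : ℕ} [NeZero d] (h : Fin d → ℝ) (A B : ℝ)
    (hh : ∀ j, h j = if j = 0 then A else B) :
    ∑ j, h j = A + ((d : ℝ) - 1) * B := by
  have h1 : 1 ≤ d := Nat.one_le_iff_ne_zero.2 (NeZero.ne d)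
  rw [← Finset.add_sum_erase _ _ (Finset.mem_univ 0), hh 0, if_pos rfl]
  congr 1
  rw [Finset.sum_congr rfl (fun i hi => by
    rw [hh i, if_neg (Finset.ne_of_mem_erase hi)]), Finset.sum_const,
    Finset.card_erase_of_mem (Finset.mem_univ 0), Finset.card_univ, Fintype.card_fin,
    nsmul_eq_mul, Nat.cast_sub h1, Nat.cast_one]

lemma inner_swap {d : ℕ} [NeZero d] (hd : 2 ≤ d) (a b : ℝ) (u w : EuclideanSpace ℝ (Fin d))
    (hu0 : u 0 = a * ((d : ℝ) - 1) * Real.sqrt (1 / ((d : ℝ) * ((d : ℝ) - 1))))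
    (huj : ∀ j : Fin d, j ≠ 0 → u j = -a * Real.sqrt (1 / ((d : ℝ) * ((d : ℝ) - 1))))
    (hw0 : w 0 = b * ((d : ℝ) - 1) * Real.sqrt (1 / ((d : ℝ) * ((d : ℝ) - 1))))
    (hwj : ∀ j : Fin d, j ≠ 0 → w j = -b * Real.sqrt (1 / ((d : ℝ) * ((d : ℝ) - 1))))
    (j : Fin d) :
    ⟪u, permVec (Equiv.swap 0 j) w⟫ = if j = 0 then a * b else -(a * b) / ((d : ℝ) - 1) := by
  set s := Real.sqrt (1 / ((d : ℝ) * ((d : ℝ) - 1))) with hs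
  have hd2 : (2 : ℝ) ≤ (d : ℝ) := by exact_mod_cast hd
  have hD : (0 : ℝ) < (d : ℝ) - 1 := by linarith
  have hpos : (0 : ℝ) < (d : ℝ) * ((d : ℝ) - 1) := by nlinarith
  have hs2 : s ^ 2 = 1 / ((d : ℝ) * ((d : ℝ) - 1)) := Real.sq_sqrt (by positivity)
  have hss : s * s * ((d:ℝ) * ((d:ℝ) - 1)) = 1 := by
    rw [← sq, hs2]; field_simp
  have hinner : ⟪u, permVec (Equiv.swap 0 j) w⟫ = ∑ i : Fin d, u i * w (Equiv.swap 0 j i) := by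
    simp [permVec, PiLp.inner_apply, RCLike.inner_apply, conj_trivial, mul_comm]
  rw [hinner]
  by_cases hj : j = 0
  · subst hj
    rw [if_pos rfl, ← Finset.add_sum_erase _ _ (Finset.mem_univ 0),
      Finset.sum_congr rfl (fun i hi => by
        have hi2 : i ≠ 0 := Finset.ne_of_mem_erase hi
        rw [Equiv.swap_self, Equiv.refl_apply, huj i hi2, hwj i hi2]),
      Finset.sum_const, Finset.card_erase_of_mem (Finset.mem_univ 0), Finset.card_univ,
      Fintype.card_fin, nsmul_eq_mul, Nat.cast_sub (by omega : 1 ≤ d), Nat.cast_one,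
      Equiv.swap_self, Equiv.refl_apply, hu0, hw0]
    linear_combination (a * b) * hss
  · rw [if_neg hj]
    have hj0 : j ∈ Finset.univ.erase (0 : Fin d) := Finset.mem_erase.2 ⟨hj, Finset.mem_univ _⟩
    have hcard : ((d - 1 - 1 : ℕ) : ℝ) = (d : ℝ) - 2 := by
      have : d - 1 - 1 = d - 2 := by omega
      rw [this, Nat.cast_sub hd]; norm_num
    rw [← Finset.add_sum_erase _ _ (Finset.mem_univ 0), ← Finset.add_sum_erase _ _ hj0,
      Finset.sum_congr rfl (fun i hi => by
        have hi1 : i ≠ j := Finset.ne_of_mem_erase hi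
        have hi2 : i ≠ 0 := Finset.ne_of_mem_erase (Finset.mem_of_mem_erase hi)
        rw [Equiv.swap_apply_of_ne_of_ne hi2 hi1, huj i hi2, hwj i hi2]),
      Finset.sum_const, Finset.card_erase_of_mem hj0, Finset.card_erase_of_mem (Finset.mem_univ 0),
      Finset.card_univ, Fintype.card_fin, nsmul_eq_mul, hcard,
      Equiv.swap_apply_left, Equiv.swap_apply_right, hu0, huj j hj, hw0, hwj j hj,
      eq_div_iff hD.ne']
    linear_combination (-(a * b)) * hss

lemma ratio_closed {d : ℕ} (hd : 2 ≤ d) {σ : ℝ} (hσ : 0 < σ) (t : ℝ)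
    (F : Fin d → ℝ) (hF1 : ∑ j, Real.exp (F j / σ ^ 2)
      = Real.exp (t / σ ^ 2) + ((d : ℝ) - 1) * Real.exp ((-t / ((d : ℝ) - 1)) / σ ^ 2))
    (hF2 : ∑ j, (Real.exp (F j / σ ^ 2)) ^ 2
      = (Real.exp (t / σ ^ 2)) ^ 2 + ((d : ℝ) - 1) * (Real.exp ((-t / ((d : ℝ) - 1)) / σ ^ 2)) ^ 2) :
    (∑ j, (Real.exp (F j / σ ^ 2)) ^ 2) / (∑ j, Real.exp (F j / σ ^ 2)) ^ 2
      = (1 + ((d : ℝ) - 1) * Real.exp (-2 * (d : ℝ) * t / (((d : ℝ) - 1) * σ ^ 2)))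
        / (1 + ((d : ℝ) - 1) * Real.exp (-(d : ℝ) * t / (((d : ℝ) - 1) * σ ^ 2))) ^ 2 := by
  have hd2 : (2 : ℝ) ≤ (d : ℝ) := by exact_mod_cast hd
  have hD : (0 : ℝ) < (d : ℝ) - 1 := by linarith
  have hσ2 : (σ : ℝ) ^ 2 ≠ 0 := by positivity
  have h1 : Real.exp ((-t / ((d : ℝ) - 1)) / σ ^ 2)
      = Real.exp (t / σ ^ 2) * Real.exp (-(d : ℝ) * t / (((d : ℝ) - 1) * σ ^ 2)) := by
    rw [← Real.exp_add]; congr 1; field_simp; ring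
  have h2 : (Real.exp ((-t / ((d : ℝ) - 1)) / σ ^ 2)) ^ 2
      = (Real.exp (t / σ ^ 2)) ^ 2 * Real.exp (-2 * (d : ℝ) * t / (((d : ℝ) - 1) * σ ^ 2)) := by
    rw [h1, mul_pow, sq (Real.exp (-(d : ℝ) * t / _)), ← Real.exp_add]
    congr 1; field_simp; ring
  rw [hF1, hF2, h2, h1]
  have hE : (Real.exp (t / σ ^ 2)) ^ 2 ≠ 0 := by positivity
  rw [show (Real.exp (t / σ ^ 2)) ^ 2
      + ((d : ℝ) - 1) * ((Real.exp (t / σ ^ 2)) ^ 2 * Real.exp (-2 * (d : ℝ) * t / (((d : ℝ) - 1) * σ ^ 2)))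
      = (Real.exp (t / σ ^ 2)) ^ 2 * (1 + ((d : ℝ) - 1) * Real.exp (-2 * (d : ℝ) * t / (((d : ℝ) - 1) * σ ^ 2))) from by ring,
    show (Real.exp (t / σ ^ 2)
      + ((d : ℝ) - 1) * (Real.exp (t / σ ^ 2) * Real.exp (-(d : ℝ) * t / (((d : ℝ) - 1) * σ ^ 2)))) ^ 2
      = (Real.exp (t / σ ^ 2)) ^ 2 * (1 + ((d : ℝ) - 1) * Real.exp (-(d : ℝ) * t / (((d : ℝ) - 1) * σ ^ 2))) ^ 2 from by ring,
    mul_div_mul_left _ _ hE]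

/-- **Closed forms of the surrogate variances at the worst case.** With the worst-case vectors
`f, g` and transpositions `π j = swap 0 j`, the Fenton–Wilkinson surrogate variances
`σ_{Z1}²` and `σ_{Z2}²` take the closed forms of Eq. (12) in Theorem 3. -/
theorem surrogate_variance_closed_forms {d : ℕ} [NeZero d] (hd : 2 ≤ d) {c c' σ : ℝ}
    (hc : 0 < c) (hc' : 0 < c') (hσ : 0 < σ) (f g : EuclideanSpace ℝ (Fin d))
    (hf0 : f 0 = c' * ((d : ℝ) - 1) * Real.sqrt (1 / ((d : ℝ) * ((d : ℝ) - 1))))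
    (hfj : ∀ j : Fin d, j ≠ 0 → f j = -c' * Real.sqrt (1 / ((d : ℝ) * ((d : ℝ) - 1))))
    (hg0 : g 0 = c * ((d : ℝ) - 1) * Real.sqrt (1 / ((d : ℝ) * ((d : ℝ) - 1))))
    (hgj : ∀ j : Fin d, j ≠ 0 → g j = -c * Real.sqrt (1 / ((d : ℝ) * ((d : ℝ) - 1)))) :
    (Real.log
        ((∑ j : Fin d, (Real.exp (⟪f, permVec (Equiv.swap 0 j) g⟫ / σ ^ 2)) ^ 2)
            / (∑ j : Fin d, Real.exp (⟪f, permVec (Equiv.swap 0 j) g⟫ / σ ^ 2)) ^ 2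
          * (Real.exp (c ^ 2 / σ ^ 2) - 1) + 1)
      = Real.log
          ((1 + ((d : ℝ) - 1) * Real.exp (-2 * (d : ℝ) * c * c' / (((d : ℝ) - 1) * σ ^ 2)))
              / (1 + ((d : ℝ) - 1) *
                  Real.exp (-(d : ℝ) * c * c' / (((d : ℝ) - 1) * σ ^ 2))) ^ 2
            * (Real.exp (c ^ 2 / σ ^ 2) - 1) + 1)) ∧
    (Real.log
        ((∑ j : Fin d, (Real.exp (⟪f + g, permVec (Equiv.swap 0 j) g⟫ / σ ^ 2)) ^ 2)
            / (∑ j : Fin d, Real.exp (⟪f + g, permVec (Equiv.swap 0 j) g⟫ / σ ^ 2)) ^ 2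
          * (Real.exp (c ^ 2 / σ ^ 2) - 1) + 1)
      = Real.log
          ((1 + ((d : ℝ) - 1) *
                Real.exp (-2 * (d : ℝ) * c * (c + c') / (((d : ℝ) - 1) * σ ^ 2)))
              / (1 + ((d : ℝ) - 1) *
                  Real.exp (-(d : ℝ) * c * (c + c') / (((d : ℝ) - 1) * σ ^ 2))) ^ 2
            * (Real.exp (c ^ 2 / σ ^ 2) - 1) + 1)) := by
  have hI1 : ∀ j : Fin d, ⟪f, permVec (Equiv.swap 0 j) g⟫
      = if j = 0 then c * c' else -(c * c') / ((d : ℝ) - 1) := by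
    intro j
    rw [inner_swap hd c' c f g hf0 hfj hg0 hgj j, mul_comm c' c]
  have hfg0 : (f + g) 0 = (c + c') * ((d : ℝ) - 1) * Real.sqrt (1 / ((d : ℝ) * ((d : ℝ) - 1))) := by
    rw [PiLp.add_apply, hf0, hg0]; ring
  have hfgj : ∀ j : Fin d, j ≠ 0 →
      (f + g) j = -(c + c') * Real.sqrt (1 / ((d : ℝ) * ((d : ℝ) - 1))) := by
    intro j hj; rw [PiLp.add_apply, hfj j hj, hgj j hj]; ring
  have hI2 : ∀ j : Fin d, ⟪f + g, permVec (Equiv.swap 0 j) g⟫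
      = if j = 0 then c * (c + c') else -(c * (c + c')) / ((d : ℝ) - 1) := by
    intro j
    rw [inner_swap hd (c + c') c (f + g) g hfg0 hfgj hg0 hgj j, mul_comm (c + c') c]
  constructor
  · rw [ratio_closed hd hσ (c * c') (fun j => ⟪f, permVec (Equiv.swap 0 j) g⟫)
      (sum_if_fin _ _ _ (fun j => by simp only [hI1 j]; split_ifs <;> rfl))
      (sum_if_fin _ _ _ (fun j => by simp only [hI1 j]; split_ifs <;> rfl)),
      show -2 * (d : ℝ) * (c * c') = -2 * (d : ℝ) * c * c' from by ring,
      show -(d : ℝ) * (c * c') = -(d : ℝ) * c * c' from by ring]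
  · rw [ratio_closed hd hσ (c * (c + c')) (fun j => ⟪f + g, permVec (Equiv.swap 0 j) g⟫)
      (sum_if_fin _ _ _ (fun j => by simp only [hI2 j]; split_ifs <;> rfl))
      (sum_if_fin _ _ _ (fun j => by simp only [hI2 j]; split_ifs <;> rfl)),
      show -2 * (d : ℝ) * (c * (c + c')) = -2 * (d : ℝ) * c * (c + c') from by ring,
      show -(d : ℝ) * (c * (c + c')) = -(d : ℝ) * c * (c + c') from by ring]
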